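/- For natural numbers n and j and complex number a such that (2a-j)_k ≠ 0 for 0 ≤ k ≤ 2n, ∑_{k=0}^{2n} (-2n)_k (a)_k 2^k / ((2a-j)_k k!) = (2^{2n} (1/2)_n / (2a-j)_{2n}) · ∑_{r=0}^{min(⌊j/2⌋, n)} (-1)^r C(j,2r) (-n)_r (a)_{n-r}. -/

import Mathlib

open Finset

/-- The Pochhammer symbol (rising factorial) `(x)_k = x (x+1) ⋯ (x+k-1)`. -/
noncomputable def poch (x : ℂ) (k : ℕ) : ℂ := (ascPochhammer ℂ k).eval x


lemma poch_zero (x : ℂ) : poch x 0 = 1 := by simp [poch]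

lemma poch_one (x : ℂ) : poch x 1 = x := by simp [poch, ascPochhammer_one]

lemma poch_succ (x : ℂ) (k : ℕ) : poch x (k+1) = poch x k * (x + k) := by
  simp [poch, ascPochhammer_succ_eval]

lemma poch_add (x : ℂ) (m k : ℕ) : poch x (m + k) = poch x m * poch (x + m) k := by
  have h2 := congrArg (Polynomial.eval x) (ascPochhammer_mul ℂ m k)
  simpa [poch, Polynomial.eval_comp] using h2.symm

lemma poch_one_add (x : ℂ) (m : ℕ) : poch x (1 + m) = x * poch (x + 1) m := by
  rw [poch_add]; simp [poch, ascPochhammer_one]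

lemma vandermonde (N : ℕ) : ∀ b c : ℂ,
    ∑ m ∈ range (N+1), (-1:ℂ)^m * (N.choose m : ℂ) * poch b m * poch (c + m) (N - m)
      = poch (c - b) N := by
  induction N with
  | zero => intro b c; simp [poch_zero]
  | succ N ih =>
    intro b c
    have key : ∀ m ∈ range (N+2),
        (-1:ℂ)^m * ((N+1).choose m : ℂ) * poch b m * poch (c + m) (N+1-m)
        = (-1:ℂ)^m * (N.choose m : ℂ) * poch b m * poch (c + m) (N+1-m)
          + (-1:ℂ)^m * (((N+1).choose m : ℂ) - (N.choose m : ℂ)) * poch b m * poch (c + m) (N+1-m) := by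
      intro m _; ring
    rw [Finset.sum_congr rfl key, Finset.sum_add_distrib]
    have h1 : ∑ m ∈ range (N+2), (-1:ℂ)^m * (N.choose m : ℂ) * poch b m * poch (c + m) (N+1-m)
        = poch (c - b) N * (c + N) := by
      rw [Finset.sum_range_succ]
      rw [Nat.choose_succ_self]
      simp only [Nat.cast_zero, mul_zero, zero_mul, mul_zero, add_zero]
      have : ∀ m ∈ range (N+1),
          (-1:ℂ)^m * (N.choose m : ℂ) * poch b m * poch (c + m) (N+1-m)
          = ((-1:ℂ)^m * (N.choose m : ℂ) * poch b m * poch (c + m) (N-m)) * (c + N) := by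
        intro m hm
        rw [mem_range] at hm
        rw [show N + 1 - m = (N - m) + 1 from by omega, poch_succ]
        have : (c + m) + ((N - m : ℕ) : ℂ) = c + N := by
          have : ((N - m : ℕ) : ℂ) = (N : ℂ) - m := by
            rw [Nat.cast_sub (by omega)]
          rw [this]; ring
        rw [this]; ring
      rw [Finset.sum_congr rfl this, ← Finset.sum_mul, ih b c]
    have h2 : ∑ m ∈ range (N+2), (-1:ℂ)^m * (((N+1).choose m : ℂ) - (N.choose m : ℂ)) * poch b m * poch (c + m) (N+1-m)
        = -b * poch (c - b) N := by
      rw [Finset.sum_range_succ' _ (N+1)]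
      simp only [Nat.choose_zero_right, Nat.cast_one, sub_self, pow_zero, one_mul, zero_mul, mul_zero, add_zero, zero_mul]
      have : ∀ k ∈ range (N+1),
          (-1:ℂ)^(k+1) * (((N+1).choose (k+1) : ℂ) - (N.choose (k+1) : ℂ)) * poch b (k+1) * poch (c + ((k+1:ℕ):ℂ)) (N+1-(k+1))
          = (-b) * ((-1:ℂ)^k * (N.choose k : ℂ) * poch (b+1) k * poch ((c+1) + k) (N-k)) := by
        intro k hk
        have hch : ((N+1).choose (k+1) : ℂ) - (N.choose (k+1) : ℂ) = (N.choose k : ℂ) := by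
          rw [Nat.choose_succ_succ]; push_cast; ring
        rw [hch, show (k:ℕ)+1 = 1 + k from by omega, poch_one_add,
          show N + 1 - (1 + k) = N - k from by omega]
        push_cast
        rw [show c + (1+(k:ℂ)) = (c+1) + k from by ring]
        ring
      rw [Finset.sum_congr rfl this, ← Finset.mul_sum, ih (b+1) (c+1)]
      rw [show (c+1) - (b+1) = c - b from by ring]
    rw [h1, h2, poch_succ]
    ring

noncomputable def cc (j : ℕ) (z : ℤ) : ℂ := if 0 ≤ z then (j.choose z.toNat : ℂ) else 0

noncomputable def Ssum (N : ℕ) (a d : ℂ) : ℂ :=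
  ∑ i ∈ range (N+1), (-1:ℂ)^i * (N.choose i : ℂ) * poch a i * poch d (N - i)

noncomputable def FF (N j : ℕ) (a : ℂ) : ℂ :=
  (N.factorial : ℂ) * (-1)^N * ∑ m ∈ range (N+1), cc j ((N:ℤ) - 2*m) * poch a m / (m.factorial : ℂ)


lemma cc_neg {j : ℕ} {z : ℤ} (h : z < 0) : cc j z = 0 := by simp [cc, not_le.mpr h]

lemma cc_coe (j t : ℕ) : cc j (t : ℤ) = (j.choose t : ℂ) := by simp [cc]

lemma absorption (j t : ℕ) (ht : 1 ≤ t) :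
    (t : ℂ) * (j.choose t : ℂ) = ((j:ℂ) - t + 1) * (j.choose (t-1) : ℂ) := by
  rcases le_or_gt t j with hle | hgt
  · have h := Nat.choose_succ_right_eq j (t-1)
    rw [show t - 1 + 1 = t from by omega] at h
    have h3 := congrArg (fun x : ℕ => (x : ℂ)) h
    push_cast [Nat.cast_sub (show t-1 ≤ j by omega), Nat.cast_sub (show 1 ≤ t by omega)] at h3
    linear_combination h3
  · rcases eq_or_lt_of_le (Nat.succ_le_of_lt hgt) with heq | hlt
    · rw [Nat.choose_eq_zero_of_lt hgt, show (j:ℂ) - t + 1 = -((t:ℂ) - 1 - j) from by ring]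
      have : (t:ℂ) - 1 - j = 0 := by
        have : ((t - 1 : ℕ) : ℂ) = (j : ℂ) := by rw [show t - 1 = j from by omega]
        rw [Nat.cast_sub (by omega)] at this; push_cast at this; linear_combination this
      rw [this]; ring
    · rw [Nat.choose_eq_zero_of_lt hgt, Nat.choose_eq_zero_of_lt (by omega)]
      ring

lemma cc_key (j : ℕ) (K : ℤ) (m : ℕ) :
    ((K : ℂ) + 2*m) * cc j K = ((j:ℂ) - K - 2*m + 1) * cc j (K-1) + 2*m * cc (j+1) K := by
  rcases lt_trichotomy K 0 with hK | hK | hK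
  · rw [cc_neg hK, cc_neg (by omega), cc_neg hK]; ring
  · subst hK
    norm_num [cc]
  · -- K ≥ 1
    set t := K.toNat with ht
    have hKt : K = (t : ℤ) := by omega
    have ht1 : 1 ≤ t := by omega
    rw [hKt, cc_coe, show ((t:ℤ) - 1) = ((t - 1 : ℕ) : ℤ) from by omega, cc_coe, cc_coe]
    have pascal : ((j+1).choose t : ℂ) = (j.choose t : ℂ) + (j.choose (t-1) : ℂ) := by
      rw [show t = (t-1)+1 from by omega, Nat.choose_succ_succ]
      push_cast; ring
    rw [pascal]
    have habs := absorption j t ht1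
    push_cast
    linear_combination habs

lemma S_rec (N : ℕ) (a d : ℂ) :
    Ssum (N+2) a d = (d - a + (N+1)) * Ssum (N+1) a d + 2*((N:ℂ)+1)*a * Ssum N (a+1) d := by
  unfold Ssum
  have key : ∀ i ∈ range (N+3),
      (-1:ℂ)^i * ((N+2).choose i : ℂ) * poch a i * poch d (N+2-i)
      = (-1:ℂ)^i * ((N+1).choose i : ℂ) * poch a i * poch d (N+2-i)
        + (-1:ℂ)^i * (((N+2).choose i : ℂ) - ((N+1).choose i : ℂ)) * poch a i * poch d (N+2-i) := by
    intro i _; ring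
  rw [Finset.sum_congr rfl key, Finset.sum_add_distrib]
  -- SumA
  have hA : ∑ i ∈ range (N+3), (-1:ℂ)^i * ((N+1).choose i : ℂ) * poch a i * poch d (N+2-i)
      = ∑ i ∈ range (N+2), (-1:ℂ)^i * ((N+1).choose i : ℂ) * poch a i * poch d (N+1-i) * (d + (N+1) - i) := by
    rw [Finset.sum_range_succ, Nat.choose_succ_self]
    simp only [Nat.cast_zero, mul_zero, zero_mul, add_zero]
    refine Finset.sum_congr rfl fun i hi => ?_
    rw [mem_range] at hi
    rw [show N + 2 - i = (N + 1 - i) + 1 from by omega, poch_succ,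
      show ((N+1-i:ℕ):ℂ) = (N:ℂ) + 1 - i from by rw [Nat.cast_sub (by omega)]; push_cast; ring]
    ring
  -- SumB
  have hB : ∑ i ∈ range (N+3), (-1:ℂ)^i * (((N+2).choose i : ℂ) - ((N+1).choose i : ℂ)) * poch a i * poch d (N+2-i)
      = -∑ i ∈ range (N+2), (-1:ℂ)^i * ((N+1).choose i : ℂ) * poch a i * poch d (N+1-i) * (a + i) := by
    rw [Finset.sum_range_succ' _ (N+2)]
    simp only [Nat.choose_zero_right, Nat.cast_one, sub_self, pow_zero, zero_mul, mul_zero, add_zero]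
    rw [← Finset.sum_neg_distrib]
    refine Finset.sum_congr rfl fun k hk => ?_
    have hch : (((N+2).choose (k+1) : ℕ) : ℂ) - (((N+1).choose (k+1) : ℕ) : ℂ) = ((N+1).choose k : ℂ) := by
      rw [show N+2 = (N+1)+1 from rfl, Nat.choose_succ_succ]; push_cast; ring
    rw [hch, show N+2-(k+1) = N+1-k from by omega, show (k:ℕ)+1 = k+1 from rfl]
    rw [show poch a (k+1) = poch a k * (a + k) from poch_succ a k]
    push_cast
    ring
  rw [hA, hB]
  -- combine into (d - a + N+1)*S_{N+1} - 2*T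
  have hcomb : ∑ i ∈ range (N+2), (-1:ℂ)^i * ((N+1).choose i : ℂ) * poch a i * poch d (N+1-i) * (d + (N+1) - i)
      + -∑ i ∈ range (N+2), (-1:ℂ)^i * ((N+1).choose i : ℂ) * poch a i * poch d (N+1-i) * (a + i)
      = (d - a + (N+1)) * ∑ i ∈ range (N+2), (-1:ℂ)^i * ((N+1).choose i : ℂ) * poch a i * poch d (N+1-i)
        - 2 * ∑ i ∈ range (N+2), (i:ℂ) * ((-1:ℂ)^i * ((N+1).choose i : ℂ) * poch a i * poch d (N+1-i)) := by
    rw [← Finset.sum_neg_distrib, ← Finset.sum_add_distrib, Finset.mul_sum, Finset.mul_sum,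
      ← Finset.sum_sub_distrib]
    refine Finset.sum_congr rfl fun i _ => ?_
    ring
  rw [hcomb]
  -- T = -(N+1) a Ssum N (a+1) d
  have hT : ∑ i ∈ range (N+2), (i:ℂ) * ((-1:ℂ)^i * ((N+1).choose i : ℂ) * poch a i * poch d (N+1-i))
      = -(((N:ℂ)+1) * a * ∑ k ∈ range (N+1), (-1:ℂ)^k * (N.choose k : ℂ) * poch (a+1) k * poch d (N-k)) := by
    rw [Finset.sum_range_succ' _ (N+1)]
    simp only [Nat.cast_zero, zero_mul, add_zero]
    rw [Finset.mul_sum, ← Finset.sum_neg_distrib]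
    refine Finset.sum_congr rfl fun k hk => ?_
    have hch : ((k:ℂ)+1) * (((N+1).choose (k+1) : ℕ) : ℂ) = ((N:ℂ)+1) * ((N.choose k : ℕ) : ℂ) := by
      have := Nat.add_one_mul_choose_eq N k
      have h2 : ((N+1) * N.choose k : ℕ) = ((N+1).choose (k+1) * (k+1) : ℕ) := by
        simpa [Nat.succ_eq_add_one] using this
      have h3 := congrArg (fun t : ℕ => (t : ℂ)) h2
      push_cast at h3 ⊢
      linear_combination -h3
    rw [show poch a (k+1) = a * poch (a+1) k from by
      rw [show k+1 = 1+k from by omega]; exact poch_one_add a k,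
      show N+1-(k+1) = N-k from by omega]
    push_cast
    linear_combination (-(a * poch (a+1) k * poch d (N-k) * (-1:ℂ)^k)) * hch
  rw [hT]
  ring

lemma F_rec (N j : ℕ) (a : ℂ) :
    FF (N+2) j a = ((N:ℂ)+1-(j:ℂ)) * FF (N+1) j a + 2*((N:ℂ)+1)*a * FF N (j+1) (a+1) := by
  unfold FF
  -- rewrite second term on RHS as a sum over range (N+2)
  have hshift : ((N+1).factorial : ℂ) * (-1)^N *
        ∑ m ∈ range (N+2), 2*(m:ℂ) * cc (j+1) ((N:ℤ)+2 - 2*m) * poch a m / (m.factorial : ℂ)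
      = 2*((N:ℂ)+1)*a * ((N.factorial : ℂ) * (-1)^N *
        ∑ m ∈ range (N+1), cc (j+1) ((N:ℤ) - 2*m) * poch (a+1) m / (m.factorial : ℂ)) := by
    rw [Finset.sum_range_succ' _ (N+1)]
    simp only [Nat.cast_zero, mul_zero, zero_mul, zero_div, add_zero, zero_add]
    rw [Finset.mul_sum, Finset.mul_sum, Finset.mul_sum]
    refine Finset.sum_congr rfl fun m hm => ?_
    have hz : ((N:ℤ) + 2 - 2*((m:ℤ)+1)) = (N:ℤ) - 2*m := by ring
    have hp : poch a (m+1) = a * poch (a+1) m := by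
      rw [show m+1 = 1+m from by omega]; exact poch_one_add a m
    have hfac : ((m+1).factorial : ℂ) = ((m:ℂ)+1) * (m.factorial : ℂ) := by
      rw [Nat.factorial_succ]; push_cast; ring
    have hfacN : (((N+1)).factorial : ℂ) = ((N:ℂ)+1) * (N.factorial : ℂ) := by
      rw [Nat.factorial_succ]; push_cast; ring
    have hmf : (m.factorial : ℂ) ≠ 0 := by exact_mod_cast m.factorial_ne_zero
    push_cast
    have hm1 : ((m:ℂ)+1) ≠ 0 := Nat.cast_add_one_ne_zero m
    rw [hz, hp, hfac, hfacN]
    field_simp [hmf, hm1]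

  -- drop last term of LHS sum
  have hlhs : ((N+2).factorial : ℂ) * (-1)^(N+2) *
        ∑ m ∈ range (N+3), cc j (((N:ℤ)+2) - 2*m) * poch a m / (m.factorial : ℂ)
      = ((N+2).factorial : ℂ) * (-1)^N *
        ∑ m ∈ range (N+2), cc j (((N:ℤ)+2) - 2*m) * poch a m / (m.factorial : ℂ) := by
    rw [Finset.sum_range_succ]
    rw [cc_neg (by push_cast; omega)]
    rw [show (-1:ℂ)^(N+2) = (-1)^N from by rw [pow_add]; norm_num]
    simp
  push_cast at hlhs hshift ⊢
  rw [hlhs, ← hshift]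
  -- now everything is (stuff) * sums over range (N+2); combine pointwise
  rw [show ((N:ℂ)+1-(j:ℂ)) * (((N+1).factorial : ℂ) * (-1)^(N+1) *
        ∑ m ∈ range (N+2), cc j (((N:ℤ)+1) - 2*m) * poch a m / (m.factorial : ℂ))
      = ((N+1).factorial : ℂ) * (-1)^N *
        ∑ m ∈ range (N+2), (((j:ℂ) - ((N:ℂ)+1)) * cc j (((N:ℤ)+1) - 2*m)) * poch a m / (m.factorial : ℂ) from by
    rw [Finset.mul_sum, Finset.mul_sum, Finset.mul_sum]
    rw [pow_succ]
    refine Finset.sum_congr rfl fun m hm => ?_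
    ring]
  rw [← mul_add, ← Finset.sum_add_distrib, Finset.mul_sum, Finset.mul_sum]
  refine Finset.sum_congr rfl fun m hm => ?_
  have hK := cc_key j ((N:ℤ)+2 - 2*m) m
  have hfac2 : ((N+2).factorial : ℂ) = ((N:ℂ)+2) * ((N+1).factorial : ℂ) := by
    rw [Nat.factorial_succ]; push_cast; ring
  have hz1 : ((N:ℤ)+2 - 2*m) - 1 = ((N:ℤ)+1) - 2*m := by ring
  rw [hz1] at hK
  have hcast : ((((N:ℤ)+2 - 2*(m:ℤ)) : ℤ) : ℂ) = (N:ℂ) + 2 - 2*m := by push_cast; ring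
  rw [hcast] at hK
  have hmf : (m.factorial : ℂ) ≠ 0 := by exact_mod_cast m.factorial_ne_zero
  rw [hfac2]
  field_simp
  linear_combination (((N+1).factorial : ℂ) * poch a m) * hK

lemma S_F_zero (j : ℕ) (a : ℂ) : Ssum 0 a (a - j) = FF 0 j a := by
  simp [Ssum, FF, cc, poch_zero]

lemma S_F_one (j : ℕ) (a : ℂ) : Ssum 1 a (a - j) = FF 1 j a := by
  rw [Ssum, FF]
  rw [show (1:ℕ)+1 = 2 from rfl, Finset.sum_range_succ, Finset.sum_range_succ,
    Finset.sum_range_zero, Finset.sum_range_succ, Finset.sum_range_succ, Finset.sum_range_zero]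
  norm_num [poch_zero, poch_one, cc]
  ring

lemma S_eq_F : ∀ N j : ℕ, ∀ a : ℂ, Ssum N a (a - j) = FF N j a := by
  intro N
  induction N using Nat.strong_induction_on with
  | _ N ih =>
    match N with
    | 0 => exact S_F_zero
    | 1 => exact S_F_one
    | (M+2) =>
      intro j a
      have h1 := ih (M+1) (by omega) j a
      have h2 := ih M (by omega) (j+1) (a+1)
      have h2' : Ssum M (a+1) (a - j) = FF M (j+1) (a+1) := by
        rw [show a - (j:ℂ) = (a+1) - ((j+1:ℕ):ℂ) from by push_cast; ring]
        exact h2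
      linear_combination S_rec M a (a - (j:ℂ)) - F_rec M j a
        + ((a - (j:ℂ)) - a + ((M:ℂ)+1)) * h1 + 2*((M:ℂ)+1)*a * h2'

lemma poch_neg_nat (N k : ℕ) : poch (-(N:ℂ)) k = (-1)^k * (k.factorial : ℂ) * (N.choose k : ℂ) := by
  have h1 := ascPochhammer_eval_neg_eq_descPochhammer (R := ℂ) (N:ℂ) k
  have h2 := descPochhammer_eval_eq_descFactorial ℂ N k
  rw [poch, h1, h2, Nat.descFactorial_eq_factorial_mul_choose]
  push_cast; ring

lemma phi_eq (N : ℕ) (a c : ℂ) :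
    ∑ k ∈ range (N+1), poch (-(N:ℂ)) k * poch a k * 2^k * poch (c + k) (N - k) / (k.factorial : ℂ)
      = Ssum N a (c - a) := by
  have step1 : ∀ k ∈ range (N+1),
      poch (-(N:ℂ)) k * poch a k * 2^k * poch (c + k) (N - k) / (k.factorial : ℂ)
      = ∑ i ∈ range (k+1), (-1:ℂ)^k * (N.choose k : ℂ) * (k.choose i : ℂ) * poch a k * poch (c + k) (N - k) := by
    intro k _
    have h2 : (2:ℂ)^k = ∑ i ∈ range (k+1), (k.choose i : ℂ) := by
      have h3 := congrArg (fun t : ℕ => (t : ℂ)) (Nat.sum_range_choose k)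
      push_cast at h3
      exact h3.symm
    rw [poch_neg_nat, h2, Finset.mul_sum, Finset.sum_mul, Finset.sum_div]
    refine Finset.sum_congr rfl fun i _ => ?_
    have hkf : (k.factorial : ℂ) ≠ 0 := by exact_mod_cast k.factorial_ne_zero
    field_simp
  rw [Finset.sum_congr rfl step1]; simp only [Finset.range_eq_Ico]; rw [
    ← Finset.sum_Ico_Ico_comm 0 (N+1)
      (fun i k => (-1:ℂ)^k * (N.choose k : ℂ) * (k.choose i : ℂ) * poch a k * poch (c + k) (N - k))]
  rw [Ssum, Finset.range_eq_Ico]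
  refine Finset.sum_congr rfl fun i hi => ?_
  rw [Finset.mem_Ico] at hi
  have hiN : i ≤ N := by omega
  rw [Finset.sum_Ico_eq_sum_range, show N + 1 - i = (N - i) + 1 from by omega]
  have hv := vandermonde (N-i) (a+(i:ℂ)) (c+(i:ℂ))
  have inner : ∀ m ∈ range ((N-i)+1),
      (-1:ℂ)^(i+m) * (N.choose (i+m) : ℂ) * ((i+m).choose i : ℂ) * poch a (i+m) * poch (c + ((i+m:ℕ):ℂ)) (N - (i+m))
      = ((-1:ℂ)^i * (N.choose i : ℂ) * poch a i) *
        ((-1:ℂ)^m * ((N-i).choose m : ℂ) * poch (a+(i:ℂ)) m * poch ((c+(i:ℂ)) + m) ((N-i) - m)) := by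
    intro m hm
    rw [mem_range] at hm
    have hch := Nat.choose_mul (n := N) (show i ≤ i+m by omega)
    rw [show (i+m) - i = m from by omega] at hch
    have hch' := congrArg (fun t : ℕ => (t : ℂ)) hch
    push_cast at hch'
    rw [poch_add, show N - (i+m) = (N-i) - m from by omega, pow_add,
      show (c + ((i+m:ℕ):ℂ)) = (c+(i:ℂ)) + m from by push_cast; ring]
    push_cast
    linear_combination ((-1:ℂ)^i * (-1)^m * poch a i * poch (a+(i:ℂ)) m * poch (c+(i:ℂ)+(m:ℂ)) ((N-i)-m)) * hch'
  rw [Finset.sum_congr rfl inner, ← Finset.mul_sum, hv,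
    show (c+(i:ℂ)) - (a+(i:ℂ)) = c - a from by ring]

lemma pochHalf (n : ℕ) : (2:ℂ)^(2*n) * poch (1/2) n * (n.factorial : ℂ) = ((2*n).factorial : ℂ) := by
  induction n with
  | zero => simp [poch]
  | succ n ih =>
    rw [poch_succ, show 2*(n+1) = (2*n+1)+1 from by ring, Nat.factorial_succ (2*n+1),
      Nat.factorial_succ (2*n), Nat.factorial_succ n, pow_succ, pow_succ]
    push_cast
    linear_combination (4*((1:ℂ)/2+(n:ℂ))*((n:ℂ)+1)) * ih

lemma FF_eq (n j : ℕ) (a : ℂ) :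
    FF (2*n) j a * (n.factorial : ℂ)
      = ((2*n).factorial : ℂ) * ∑ r ∈ range (min (j/2) n + 1),
          (-1:ℂ)^r * (j.choose (2*r) : ℂ) * poch (-(n:ℂ)) r * poch a (n-r) := by
  rw [FF]
  have E1a : ∑ m ∈ range (2*n+1), cc j (((2*n:ℕ):ℤ) - 2*m) * poch a m / (m.factorial : ℂ)
      = ∑ m ∈ range (n+1), cc j (((2*n:ℕ):ℤ) - 2*m) * poch a m / (m.factorial : ℂ) := by
    refine (Finset.sum_subset (Finset.range_subset_range.mpr (by omega)) fun m hm hm' => ?_).symm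
    rw [mem_range] at hm hm'
    rw [cc_neg (by omega)]
    simp
  have E1b : ∑ m ∈ range (n+1), cc j (((2*n:ℕ):ℤ) - 2*m) * poch a m / (m.factorial : ℂ)
      = ∑ m ∈ range (n+1), (j.choose (2*(n-m)) : ℂ) * poch a m / (m.factorial : ℂ) := by
    refine Finset.sum_congr rfl fun m hm => ?_
    rw [mem_range] at hm
    rw [show ((2*n:ℕ):ℤ) - 2*m = ((2*(n-m):ℕ):ℤ) from by omega, cc_coe]
  have E1c : ∑ m ∈ range (n+1), (j.choose (2*(n-m)) : ℂ) * poch a m / (m.factorial : ℂ)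
      = ∑ r ∈ range (n+1), (j.choose (2*r) : ℂ) * poch a (n-r) / ((n-r).factorial : ℂ) := by
    rw [← Finset.sum_range_reflect]
    refine Finset.sum_congr rfl fun r hr => ?_
    rw [mem_range] at hr
    rw [show n+1-1-r = n-r from by omega, show n-(n-r) = r from by omega]
  have E1d : ∑ r ∈ range (n+1), (j.choose (2*r) : ℂ) * poch a (n-r) / ((n-r).factorial : ℂ)
      = ∑ r ∈ range (min (j/2) n + 1), (j.choose (2*r) : ℂ) * poch a (n-r) / ((n-r).factorial : ℂ) := by
    refine (Finset.sum_subset (Finset.range_subset_range.mpr (by omega)) fun r hr hr' => ?_).symm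
    rw [mem_range] at hr hr'
    rw [Nat.choose_eq_zero_of_lt (by omega)]
    simp
  rw [E1a, E1b, E1c, E1d, Finset.mul_sum, Finset.sum_mul, Finset.mul_sum]
  refine Finset.sum_congr rfl fun r hr => ?_
  rw [mem_range] at hr
  have hrn : r ≤ n := by omega
  rw [poch_neg_nat]
  have hfac := Nat.choose_mul_factorial_mul_factorial hrn
  have hfac' := congrArg (fun t : ℕ => (t : ℂ)) hfac
  push_cast at hfac'
  have hnr : ((n-r).factorial : ℂ) ≠ 0 := by exact_mod_cast (n-r).factorial_ne_zero
  have he : (-1:ℂ)^(2*(n:ℕ)) = 1 := Even.neg_one_pow ⟨n, by ring⟩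
  rw [he]
  have hs : (-1:ℂ)^r * (-1:ℂ)^r = 1 := by
    rw [← pow_add]
    exact Even.neg_one_pow ⟨r, by ring⟩
  have hfac3 : (n.choose r:ℂ) * (r.factorial:ℂ) = (n.factorial:ℂ) * (((n-r).factorial:ℂ))⁻¹ := by
    field_simp
    linear_combination hfac'
  linear_combination (-(((2*n).factorial:ℂ) * (j.choose (2*r) : ℂ) * poch a (n-r))) * hfac3
    + (-(((2*n).factorial:ℂ) * (j.choose (2*r) : ℂ) * poch a (n-r) * (r.factorial:ℂ) * (n.choose r:ℂ))) * hs


theorem twoF1_neg2n_a_twoAmj (n j : ℕ) (a : ℂ)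
    (h : ∀ k ≤ 2 * n, poch (2 * a - j) k ≠ 0) :
    ∑ k ∈ range (2 * n + 1),
        poch (-(2 * n : ℂ)) k * poch a k * 2 ^ k / (poch (2 * a - j) k * (k.factorial : ℂ))
      = (2 : ℂ) ^ (2 * n) * poch (1 / 2) n / poch (2 * a - j) (2 * n) *
          ∑ r ∈ range (min (j / 2) n + 1),
            (-1 : ℂ) ^ r * (j.choose (2 * r) : ℂ) * poch (-(n : ℂ)) r * poch a (n - r) := by
  set c : ℂ := 2 * a - j with hc
  have hc2n : poch c (2*n) ≠ 0 := h (2*n) le_rfl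
  have hcast : -(2 * (n:ℂ)) = -(((2*n : ℕ)) : ℂ) := by push_cast; ring
  have stepA : ∑ k ∈ range (2 * n + 1),
        poch (-(2 * n : ℂ)) k * poch a k * 2 ^ k / (poch c k * (k.factorial : ℂ))
      = (∑ k ∈ range (2*n+1),
          poch (-((2*n:ℕ):ℂ)) k * poch a k * 2^k * poch (c + k) (2*n - k) / (k.factorial : ℂ))
        / poch c (2*n) := by
    rw [Finset.sum_div]
    refine Finset.sum_congr rfl fun k hk => ?_
    rw [mem_range] at hk
    have hsplit := poch_add c k (2*n - k)
    rw [show k + (2*n - k) = 2*n from by omega] at hsplit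
    have hpk : poch c k ≠ 0 := h k (by omega)
    have hpq : poch (c + k) (2*n - k) ≠ 0 := by
      intro h0
      rw [hsplit, h0, mul_zero] at hc2n
      exact hc2n rfl
    have hkf : (k.factorial : ℂ) ≠ 0 := by exact_mod_cast k.factorial_ne_zero
    rw [hcast, hsplit]
    field_simp
  rw [stepA, phi_eq (2*n) a c, show c - a = a - (j:ℂ) from by rw [hc]; ring, S_eq_F (2*n) j a]
  have hnfac : (n.factorial : ℂ) ≠ 0 := by exact_mod_cast n.factorial_ne_zero
  have hnum : FF (2*n) j a = (2:ℂ)^(2*n) * poch (1/2) n *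
      ∑ r ∈ range (min (j / 2) n + 1),
        (-1 : ℂ) ^ r * (j.choose (2 * r) : ℂ) * poch (-(n : ℂ)) r * poch a (n - r) := by
    apply mul_right_cancel₀ hnfac
    have h1 := FF_eq n j a
    have h2 := pochHalf n
    calc FF (2*n) j a * (n.factorial : ℂ)
        = ((2*n).factorial : ℂ) * ∑ r ∈ range (min (j/2) n + 1),
            (-1:ℂ)^r * (j.choose (2*r) : ℂ) * poch (-(n:ℂ)) r * poch a (n-r) := h1
      _ = ((2:ℂ)^(2*n) * poch (1/2) n * ∑ r ∈ range (min (j/2) n + 1),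
            (-1:ℂ)^r * (j.choose (2*r) : ℂ) * poch (-(n:ℂ)) r * poch a (n-r)) * (n.factorial : ℂ) := by
          rw [← h2]; ring
  rw [hnum, div_mul_eq_mul_div]
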